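/- Let Ω be a finite set of size N ≥ 2, let I_0 ⊆ Ω with 0 < |I_0| < N, let μ_0, δ ∈ ℝ, and define μ : Ω → ℝ by μ(x) = μ_0 + δ for x ∈ I_0 and μ(x) = μ_0 otherwise. With b(k) := √(k(N − k))/N and μ̄_A := |A|^{−1} Σ_{x∈A} μ(x), for every subset I ⊆ Ω with 0 < |I| < N one has b(|I|)·|μ̄_I − μ̄_{I^c}| ≤ b(|I_0|)·|δ|, where I^c := Ω ∖ I. In particular, the population scan statistic is maximized at I = I_0. -/

import Mathlib

open Finset

lemma scan_aux_poly (p q r s : ℝ) (hp : 0 ≤ p) (hq : 0 ≤ q) (hr : 0 ≤ r) (hs : 0 ≤ s) :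
    (p*s - q*r)^2 ≤ (p+q)*(r+s)*((p+r)*(q+s)) := by
  nlinarith [mul_nonneg hp hq, mul_nonneg hr hs, mul_nonneg hp hs, mul_nonneg hq hr,
    mul_nonneg (mul_nonneg hp hq) (mul_nonneg hr hs),
    mul_nonneg (mul_nonneg hp hs) hs, mul_nonneg (mul_nonneg hq hr) hr,
    mul_nonneg (mul_nonneg hp hs) hr, mul_nonneg (mul_nonneg hq hr) hs,
    mul_nonneg (mul_nonneg hp hq) hq, mul_nonneg (mul_nonneg hp hq) hp,
    mul_nonneg (mul_nonneg hr hs) hr, mul_nonneg (mul_nonneg hr hs) hs]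

lemma scan_aux_sum {V : Type*} [DecidableEq V] (I0 S : Finset V) (μ0 δ : ℝ) (μ : V → ℝ)
    (hμ : ∀ x ∈ S, μ x = if x ∈ I0 then μ0 + δ else μ0) :
    ∑ x ∈ S, μ x = (S.card : ℝ) * μ0 + ((S ∩ I0).card : ℝ) * δ := by
  have h1 : ∀ x ∈ S, μ x = μ0 + (if x ∈ I0 then δ else 0) := by
    intro x hx; rw [hμ x hx]; split <;> simp
  rw [Finset.sum_congr rfl h1, Finset.sum_add_distrib, Finset.sum_const,
    Finset.sum_ite_mem, Finset.sum_const]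
  simp [nsmul_eq_mul]

/-- **The population scan statistic is maximized at the true patch.**  For a mean function
`μ = μ₀ + δ·1_{I₀}` on a finite ground set `Ω` of size `N ≥ 2` and any `I ⊆ Ω` with
`0 < |I| < N`, one has `b(|I|)|μ̄_I − μ̄_{I^c}| ≤ b(|I₀|)|δ|`, where `b(k) = √(k(N−k))/N`. -/
theorem population_scan_maximized_at_patch
    {V : Type*} [DecidableEq V]
    (Ω : Finset V) (N : ℕ) (hN : Ω.card = N) (h2 : 2 ≤ N)
    (I0 : Finset V) (hI0 : I0 ⊆ Ω) (hI0pos : 0 < I0.card) (hI0lt : I0.card < N)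
    (μ0 δ : ℝ) (μ : V → ℝ)
    (hμ : ∀ x ∈ Ω, μ x = if x ∈ I0 then μ0 + δ else μ0)
    (I : Finset V) (hI : I ⊆ Ω) (hIpos : 0 < I.card) (hIlt : I.card < N) :
    Real.sqrt ((I.card : ℝ) * ((N : ℝ) - (I.card : ℝ))) / (N : ℝ) *
        |(∑ x ∈ I, μ x) / (I.card : ℝ) - (∑ x ∈ Ω \ I, μ x) / ((Ω \ I).card : ℝ)| ≤
      Real.sqrt ((I0.card : ℝ) * ((N : ℝ) - (I0.card : ℝ))) / (N : ℝ) * |δ| := by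
  set k : ℝ := (I.card : ℝ) with hk_def
  set k0 : ℝ := (I0.card : ℝ) with hk0_def
  set a : ℝ := ((I ∩ I0).card : ℝ) with ha_def
  have hNpos : (0:ℝ) < N := by exact_mod_cast (by omega : 0 < N)
  have hk : 0 < k := by rw [hk_def]; exact_mod_cast hIpos
  have hkN : k < N := by rw [hk_def]; exact_mod_cast hIlt
  have hk0 : 0 < k0 := by rw [hk0_def]; exact_mod_cast hI0pos
  have hk0N : k0 < N := by rw [hk0_def]; exact_mod_cast hI0lt
  have ha0 : 0 ≤ a := by rw [ha_def]; positivity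
  have hak : a ≤ k := by
    rw [ha_def, hk_def]
    exact_mod_cast Finset.card_le_card (Finset.inter_subset_left)
  have hak0 : a ≤ k0 := by
    rw [ha_def, hk0_def]
    exact_mod_cast Finset.card_le_card (Finset.inter_subset_right)
  have haN : k + k0 - N ≤ a := by
    have h1 : (I ∪ I0).card + (I ∩ I0).card = I.card + I0.card :=
      Finset.card_union_add_card_inter I I0
    have h2' : (I ∪ I0).card ≤ N := by
      rw [← hN]; exact Finset.card_le_card (Finset.union_subset hI hI0)
    have : I.card + I0.card ≤ N + (I ∩ I0).card := by omega
    have := (Nat.cast_le (α := ℝ)).2 this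
    push_cast at this
    linarith
  -- cardinality of the complement
  have hcompl : ((Ω \ I).card : ℝ) = N - k := by
    have h1 : (Ω \ I).card + I.card = Ω.card := Finset.card_sdiff_add_card_eq_card hI
    have : ((Ω \ I).card : ℝ) + k = N := by rw [hk_def]; exact_mod_cast (by rw [h1, hN])
    linarith
  have hinter : (((Ω \ I) ∩ I0).card : ℝ) = k0 - a := by
    have hset : (Ω \ I) ∩ I0 = I0 \ I := by
      ext x
      simp only [Finset.mem_inter, Finset.mem_sdiff]
      constructor
      · rintro ⟨⟨_, hxI⟩, hxI0⟩; exact ⟨hxI0, hxI⟩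
      · rintro ⟨hxI0, hxI⟩; exact ⟨⟨hI0 hxI0, hxI⟩, hxI0⟩
    have h1 : (I0 \ I).card + (I0 ∩ I).card = I0.card :=
      Finset.card_sdiff_add_card_inter I0 I
    have h2' : (I0 ∩ I) = I ∩ I0 := Finset.inter_comm I0 I
    rw [hset]
    rw [h2'] at h1
    have : ((I0 \ I).card : ℝ) + a = k0 := by
      rw [ha_def, hk0_def]
      exact_mod_cast h1
    linarith
  -- compute the two sums
  have hsum1 : ∑ x ∈ I, μ x = k * μ0 + a * δ :=
    scan_aux_sum I0 I μ0 δ μ (fun x hx => hμ x (hI hx))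
  have hsum2 : ∑ x ∈ Ω \ I, μ x = (N - k) * μ0 + (k0 - a) * δ := by
    rw [scan_aux_sum I0 (Ω \ I) μ0 δ μ (fun x hx => hμ x (Finset.sdiff_subset hx)),
      hcompl, hinter]
  rw [hsum1, hsum2, hcompl]
  -- algebra
  have hkne : k ≠ 0 := ne_of_gt hk
  have hNk : (0:ℝ) < N - k := by linarith
  have hNkne : (N:ℝ) - k ≠ 0 := ne_of_gt hNk
  have hdiff : (k * μ0 + a * δ) / k - ((N - k) * μ0 + (k0 - a) * δ) / (N - k)
      = δ * (a * N - k * k0) / (k * (N - k)) := by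
    field_simp
    ring
  rw [hdiff]
  set S := Real.sqrt (k * (N - k)) with hS_def
  set T := Real.sqrt (k0 * (N - k0)) with hT_def
  have hNk0 : (0:ℝ) < N - k0 := by linarith
  have hSpos : 0 < S := Real.sqrt_pos.2 (mul_pos hk hNk)
  have hTpos : 0 < T := Real.sqrt_pos.2 (mul_pos hk0 hNk0)
  have hSsq : S ^ 2 = k * (N - k) := Real.sq_sqrt (mul_pos hk hNk).le
  have hkey : |a * N - k * k0| ≤ S * T := by
    rw [hS_def, hT_def, ← Real.sqrt_mul (mul_pos hk hNk).le]
    apply Real.abs_le_sqrt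
    have H := scan_aux_poly a (k - a) (k0 - a) (N - k - k0 + a) ha0
      (by linarith) (by linarith) (by linarith)
    calc (a * N - k * k0) ^ 2
        = (a * (N - k - k0 + a) - (k - a) * (k0 - a)) ^ 2 := by ring
      _ ≤ (a + (k - a)) * ((k0 - a) + (N - k - k0 + a)) *
            ((a + (k0 - a)) * ((k - a) + (N - k - k0 + a))) := H
      _ = k * (N - k) * (k0 * (N - k0)) := by ring
  have habs : |δ * (a * N - k * k0) / (k * (N - k))|
      = |δ| * |a * N - k * k0| / (k * (N - k)) := by
    rw [abs_div, abs_mul, abs_of_pos (by positivity : (0:ℝ) < k * (N - k))]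
  rw [habs]
  have hLHS : S / N * (|δ| * |a * N - k * k0| / (k * (N - k)))
      = |δ| * |a * N - k * k0| / (N * S) := by
    rw [← hSsq]
    field_simp
  rw [hLHS, div_le_iff₀ (by positivity)]
  have h1 : |δ| * |a * N - k * k0| ≤ |δ| * (S * T) :=
    mul_le_mul_of_nonneg_left hkey (abs_nonneg δ)
  have h2'' : T / N * |δ| * (N * S) = |δ| * (S * T) := by
    field_simp
  rw [h2'']
  exact h1
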